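/- If F is a nonempty closed subset of βω consisting of free ultrafilters that are pairwise non-isomorphic, then the family 𝓑 = {B ⊆ ω : ω∖B ∈ p for all p ∈ F} is a bornology on ω with 𝓑^♯ = F, and 𝓑 is minmax. -/

import Mathlib

open Set

def diagS (X : Type*) : Set (X × X) := {p | p.1 = p.2}

def compS {X : Type*} (E F : Set (X × X)) : Set (X × X) :=
  {p | ∃ z, (p.1, z) ∈ E ∧ (z, p.2) ∈ F}

def invS {X : Type*} (E : Set (X × X)) : Set (X × X) := {p | (p.2, p.1) ∈ E}

def ballS {X : Type*} (E : Set (X × X)) (A : Set X) : Set X :=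
  {y | ∃ x ∈ A, (x, y) ∈ E}

/-- A coarse structure on `X`. -/
structure IsCoarse {X : Type*} (E : Set (Set (X × X))) : Prop where
  diag_sub : ∀ e ∈ E, diagS X ⊆ e
  comp_mem : ∀ e ∈ E, ∀ f ∈ E, compS e f ∈ E
  inv_mem : ∀ e ∈ E, invS e ∈ E
  subset_mem : ∀ e ∈ E, ∀ f, diagS X ⊆ f → f ⊆ e → f ∈ E
  cover : ⋃₀ E = Set.univ

/-- `B` is bounded in the coarse structure `E`. -/
def IsBoundedIn {X : Type*} (E : Set (Set (X × X))) (B : Set X) : Prop :=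
  ∃ e ∈ E, ∃ x : X, B ⊆ ballS e {x}

/-- A bornology on `X` (as a family of sets). -/
structure IsBornology {X : Type*} (B : Set (Set X)) : Prop where
  cover : ⋃₀ B = Set.univ
  univ_not_mem : Set.univ ∉ B
  subset_mem : ∀ b ∈ B, ∀ a ⊆ b, a ∈ B
  union_mem : ∀ b ∈ B, ∀ c ∈ B, b ∪ c ∈ B

/-- The coarse structure `E` is compatible with the bornology `B`. -/
def Compatible {X : Type*} (E : Set (Set (X × X))) (B : Set (Set X)) : Prop :=
  ∀ b : Set X, b ∈ B ↔ IsBoundedIn E b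

/-- The largest coarse structure compatible with `B`. -/
def upB {X : Type*} (B : Set (Set X)) : Set (Set (X × X)) :=
  {e | diagS X ⊆ e ∧ ∀ b ∈ B, ballS e b ∈ B ∧ ballS (invS e) b ∈ B}

/-- The smallest coarse structure compatible with `B`. -/
def downB {X : Type*} (B : Set (Set X)) : Set (Set (X × X)) :=
  {e | diagS X ⊆ e ∧ ∃ b ∈ B, e ⊆ (b ×ˢ b) ∪ diagS X}

/-- `B^♯`: ultrafilters containing complements of all bounded sets. -/
def sharp {X : Type*} (B : Set (Set X)) : Set (Ultrafilter X) :=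
  {p | ∀ b ∈ B, (bᶜ : Set X) ∈ p}

/-- Two ultrafilters are `B`-isomorphic. -/
def BIso {X : Type*} (B : Set (Set X)) (p q : Ultrafilter X) : Prop :=
  ∃ f : X ≃ X, Ultrafilter.map f p = q ∧ (fun b : Set X => f '' b) '' B = B

/-- Two ultrafilters are isomorphic. -/
def UIso {X : Type*} (p q : Ultrafilter X) : Prop :=
  ∃ f : X ≃ X, Ultrafilter.map f p = q

/-- A free ultrafilter. -/
def FreeU {X : Type*} (p : Ultrafilter X) : Prop := ∀ x : X, p ≠ pure x

/-- The remainder `βω ∖ ω`: the set of free ultrafilters. -/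
def remainder : Set (Ultrafilter ℕ) := {p | FreeU p}

/-- `L` is large in the coarse structure `E`. -/
def IsLarge {X : Type*} (E : Set (Set (X × X))) (L : Set X) : Prop :=
  ∃ e ∈ E, ballS e L = Set.univ

/-- An unbounded coarse space is maximal if `X` is bounded in every
strictly larger coarse structure. -/
def IsMaximalCoarse {X : Type*} (E : Set (Set (X × X))) : Prop :=
  IsCoarse E ∧ ¬ IsBoundedIn E Set.univ ∧
    ∀ E' : Set (Set (X × X)), IsCoarse E' → E ⊂ E' → IsBoundedIn E' Set.univ

/-- The coarse structure on `ℕ` induced by finitely supported permutations. -/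
def finPermCoarse : Set (Set (ℕ × ℕ)) :=
  {e | diagS ℕ ⊆ e ∧ ∃ F : Finset (Equiv.Perm ℕ),
    (∀ g ∈ F, {x | g x ≠ x}.Finite) ∧
    e ⊆ {p | p.2 = p.1 ∨ ∃ g ∈ F, p.2 = g p.1}}


namespace Stmt11Aux

/-- pairing partner index: pairs `2i ↔ 2i+1`. -/
def pr (k : ℕ) : ℕ := if k % 2 = 0 then k + 1 else k - 1

lemma pr_pr (k : ℕ) : pr (pr k) = k := by unfold pr; split_ifs <;> omega

lemma pr_ne (k : ℕ) : pr k ≠ k := by unfold pr; split_ifs <;> omega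

lemma pr_le (k : ℕ) : pr k ≤ k + 1 := by unfold pr; split_ifs <;> omega

/-- position of `x` inside `T`. -/
noncomputable def posT (T : Set ℕ) (x : ℕ) : ℕ := (T ∩ Set.Iio x).ncard

lemma posT_fin (T : Set ℕ) (x : ℕ) : (T ∩ Set.Iio x).Finite :=
  (Set.finite_Iio x).subset inter_subset_right

lemma posT_lt {T : Set ℕ} {x y : ℕ} (hx : x ∈ T) (hxy : x < y) :
    posT T x < posT T y := by
  apply Set.ncard_lt_ncard
  · constructor
    · exact inter_subset_inter_right _ (fun z hz => lt_trans hz hxy)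
    · intro h
      exact absurd ((h ⟨hx, hxy⟩).2) (lt_irrefl x)
  · exact posT_fin T y

lemma posT_injOn (T : Set ℕ) : InjOn (posT T) T := by
  intro x hx y hy h
  rcases lt_trichotomy x y with hlt | heq | hgt
  · exact absurd h (Nat.ne_of_lt (posT_lt hx hlt))
  · exact heq
  · exact absurd h.symm (Nat.ne_of_lt (posT_lt hy hgt))

lemma posT_attain {T : Set ℕ} {x k : ℕ} (hx : x ∈ T) (hk : k < posT T x) :
    ∃ y ∈ T, posT T y = k := by
  have hs : (T ∩ Set.Iio x).Finite := posT_fin T x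
  have hIio : (Set.Iio (posT T x)).ncard = posT T x := by
    rw [← Finset.coe_Iio, Set.ncard_coe_finset, Nat.card_Iio]
  have himg : posT T '' (T ∩ Set.Iio x) = Set.Iio (posT T x) := by
    apply Set.eq_of_subset_of_ncard_le
    · rintro _ ⟨y, ⟨hyT, hyx⟩, rfl⟩
      exact posT_lt hyT hyx
    · rw [hIio, Set.ncard_image_of_injOn ((posT_injOn T).mono inter_subset_left)]
      exact le_rfl
    · exact (Set.finite_Iio _)
  have : k ∈ posT T '' (T ∩ Set.Iio x) := by rw [himg]; exact hk
  obtain ⟨y, ⟨hyT, _⟩, hy⟩ := this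
  exact ⟨y, hyT, hy⟩

/-- at most one "bad" (unpaired) element per fiber. -/
lemma bad_unique {T : Set ℕ} {x1 x2 : ℕ} (h1 : x1 ∈ T) (h2 : x2 ∈ T)
    (b1 : ¬ ∃ y, y ∈ T ∧ y ≠ x1 ∧ posT T y = pr (posT T x1))
    (b2 : ¬ ∃ y, y ∈ T ∧ y ≠ x2 ∧ posT T y = pr (posT T x2)) : x1 = x2 := by
  by_contra hne
  have main : ∀ a b : ℕ, a ∈ T → b ∈ T → a ≠ b →
      (¬ ∃ y, y ∈ T ∧ y ≠ a ∧ posT T y = pr (posT T a)) →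
      posT T a < posT T b → False := by
    intro a b ha hb hab bad hlt
    rcases Nat.lt_or_ge (pr (posT T a)) (posT T b) with hlt2 | hge
    · obtain ⟨y, hyT, hy⟩ := posT_attain hb hlt2
      refine bad ⟨y, hyT, ?_, hy⟩
      intro hya
      subst hya
      exact pr_ne _ hy.symm
    · have hEq : pr (posT T a) = posT T b := by
        have := pr_le (posT T a); omega
      exact bad ⟨b, hb, fun h => hab h.symm, hEq.symm⟩
  rcases lt_trichotomy (posT T x1) (posT T x2) with hlt | heq | hgt
  · exact main x1 x2 h1 h2 hne b1 hlt
  · exact hne (posT_injOn T h1 h2 heq)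
  · exact main x2 x1 h2 h1 (Ne.symm hne) b2 hgt

/-- Zorn disjointification: an injective map without fixed points on a set of an
ultrafilter admits a member of the ultrafilter displaced off itself. -/
lemma disj_lemma (g : ℕ → ℕ) (hg : Function.Injective g) (p : Ultrafilter ℕ)
    (A : Set ℕ) (hA : A ∈ p) (hfpf : ∀ x ∈ A, g x ≠ x) :
    ∃ B ∈ p, B ⊆ A ∧ (g '' B) ∩ B = ∅ := by
  classical
  set S : Set (Set ℕ) := {B | B ⊆ A ∧ (g '' B) ∩ B = ∅} with hS
  have hzorn : ∀ c ⊆ S, IsChain (· ⊆ ·) c → ∃ ub ∈ S, ∀ s ∈ c, s ⊆ ub := by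
    intro c hc hchain
    refine ⟨⋃₀ c, ⟨sUnion_subset fun s hs => (hc hs).1, ?_⟩, fun s hs => subset_sUnion_of_mem hs⟩
    rw [Set.eq_empty_iff_forall_notMem]
    rintro z ⟨⟨x, ⟨s, hsc, hxs⟩, rfl⟩, ⟨t, htc, hzt⟩⟩
    rcases hchain.total hsc htc with h | h
    · have h2 := (hc htc).2
      rw [Set.eq_empty_iff_forall_notMem] at h2
      exact h2 _ ⟨⟨x, h hxs, rfl⟩, hzt⟩
    · have h2 := (hc hsc).2
      rw [Set.eq_empty_iff_forall_notMem] at h2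
      exact h2 _ ⟨⟨x, hxs, rfl⟩, h hzt⟩
  obtain ⟨M, hM⟩ := zorn_subset S hzorn
  have hMS : M ∈ S := hM.prop
  have hcover : A ⊆ M ∪ (g ⁻¹' M ∪ g '' M) := by
    intro x hxA
    by_contra hx
    simp only [Set.mem_union, not_or] at hx
    obtain ⟨hx1, hx2, hx3⟩ := hx
    have hins : insert x M ∈ S := by
      refine ⟨insert_subset hxA hMS.1, ?_⟩
      rw [Set.eq_empty_iff_forall_notMem]
      rintro z ⟨⟨w, hw, rfl⟩, hz⟩
      rcases hw with rfl | hwM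
      · rcases hz with hz | hz
        · exact hfpf w hxA hz
        · exact hx2 hz
      · rcases hz with hz | hz
        · exact hx3 ⟨w, hwM, hz⟩
        · have h2 := hMS.2
          rw [Set.eq_empty_iff_forall_notMem] at h2
          exact h2 _ ⟨⟨w, hwM, rfl⟩, hz⟩
    have : insert x M ⊆ M := hM.2 hins (subset_insert x M)
    exact hx1 (this (mem_insert x M))
  have hun : M ∪ (g ⁻¹' M ∪ g '' M) ∈ p := Filter.mem_of_superset hA hcover
  by_cases hMp : M ∈ p
  · refine ⟨M ∩ A, Filter.inter_mem hMp hA, inter_subset_right, ?_⟩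
    have hsub : (g '' (M ∩ A)) ∩ (M ∩ A) ⊆ (g '' M) ∩ M :=
      inter_subset_inter (image_mono inter_subset_left) inter_subset_left
    rw [hMS.2] at hsub
    exact Set.subset_empty_iff.mp hsub
  · by_cases hPre : g ⁻¹' M ∈ p
    · refine ⟨(g ⁻¹' M ∩ A) \ M, ?_, fun x hx => hx.1.2, ?_⟩
      · exact Filter.inter_mem (Filter.inter_mem hPre hA)
          ((Ultrafilter.compl_mem_iff_notMem).mpr hMp)
      · rw [Set.eq_empty_iff_forall_notMem]
        rintro z ⟨⟨w, hw, rfl⟩, hz⟩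
        exact hz.2 hw.1.1
    · have hImg : g '' M ∈ p := by
        rcases (Ultrafilter.union_mem_iff.mp hun) with h | h
        · exact absurd h hMp
        · rcases (Ultrafilter.union_mem_iff.mp h) with h | h
          · exact absurd h hPre
          · exact h
      refine ⟨((g '' M ∩ A) \ M) \ g ⁻¹' M, ?_, fun x hx => hx.1.1.2, ?_⟩
      · refine Filter.inter_mem (Filter.inter_mem (Filter.inter_mem hImg hA) ?_) ?_
        · exact (Ultrafilter.compl_mem_iff_notMem).mpr hMp
        · exact (Ultrafilter.compl_mem_iff_notMem).mpr hPre
      · rw [Set.eq_empty_iff_forall_notMem]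
        rintro z ⟨⟨w, hw, rfl⟩, hz⟩
        obtain ⟨m, hm, hmz⟩ := hz.1.1.1
        have : w = m := hg (hmz.symm)
        exact hw.1.2 (this ▸ hm)

end Stmt11Aux

namespace Stmt11Aux

lemma key (F : Set (Ultrafilter ℕ))
    (hiso : ∀ p ∈ F, ∀ q ∈ F, p ≠ q → ¬ UIso p q)
    (hout : ∀ q : Ultrafilter ℕ, q ∉ F → ∃ b, (∀ p ∈ F, (bᶜ : Set ℕ) ∈ p) ∧ b ∈ q)
    (e : Set (ℕ × ℕ)) (he : e ∈ upB {b : Set ℕ | ∀ p ∈ F, bᶜ ∈ p})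
    (p : Ultrafilter ℕ) (hp : p ∈ F)
    (hD : {x : ℕ | ∃ y, y ≠ x ∧ (x, y) ∈ e} ∈ p) : False := by
  classical
  obtain ⟨hdiag, hball⟩ := he
  set D : Set ℕ := {x : ℕ | ∃ y, y ≠ x ∧ (x, y) ∈ e} with hDdef
  have hfex : ∀ x : ℕ, x ∈ D → ∃ y, y ≠ x ∧ (x, y) ∈ e := fun x hx => hx
  choose! f hf1 hf2 using hfex
  set fib : ℕ → Set ℕ := fun x => {z | z ∈ D ∧ f z = f x} with hfib
  set good : ℕ → Prop :=
    fun x => ∃ y, y ∈ fib x ∧ y ≠ x ∧ posT (fib x) y = pr (posT (fib x) x) with hgooddef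
  have hgex : ∀ x : ℕ, good x →
      ∃ y, y ∈ fib x ∧ y ≠ x ∧ posT (fib x) y = pr (posT (fib x) x) := fun x hx => hx
  choose! h hh1 hh2 hh3 using hgex
  have fib_self : ∀ x ∈ D, x ∈ fib x := fun x hx => ⟨hx, rfl⟩
  have fib_eq : ∀ x z, z ∈ fib x → fib z = fib x := by
    intro x z hz
    have hz2 : f z = f x := hz.2
    ext w
    simp only [hfib, Set.mem_setOf_eq, hz2]
  have hstep : ∀ x, x ∈ D → good x →
      h x ∈ D ∧ good (h x) ∧ h (h x) = x ∧ h x ≠ x ∧ f (h x) = f x := by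
    intro x hxD hgx
    have h1 := hh1 x hgx
    have h2 := hh2 x hgx
    have h3 := hh3 x hgx
    have hfibeq : fib (h x) = fib x := fib_eq x (h x) h1
    have hgood2 : good (h x) := by
      refine ⟨x, ?_, Ne.symm h2, ?_⟩
      · rw [hfibeq]; exact fib_self x hxD
      · rw [hfibeq, h3, pr_pr]
    refine ⟨h1.1, hgood2, ?_, h2, h1.2⟩
    have h1' := hh1 (h x) hgood2
    have h3' := hh3 (h x) hgood2
    rw [hfibeq] at h1' h3'
    rw [h3, pr_pr] at h3'
    exact posT_injOn (fib x) h1' (fib_self x hxD) h3'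
  have hSinj : Set.InjOn f {x | x ∈ D ∧ ¬ good x} := by
    intro x1 hx1 x2 hx2 hf12
    have hfibeq : fib x2 = fib x1 := by
      ext w
      simp only [hfib, Set.mem_setOf_eq, hf12]
    have hb2 : ¬ ∃ y, y ∈ fib x1 ∧ y ≠ x2 ∧ posT (fib x1) y = pr (posT (fib x1) x2) := by
      rw [← hfibeq]; exact hx2.2
    exact bad_unique (fib_self x1 hx1.1) (⟨hx2.1, hf12.symm⟩ : x2 ∈ fib x1) hx1.2 hb2
  -- the common finishing argument
  have finish : ∀ (G : ℕ ≃ ℕ) (A : Set ℕ), A ∈ p → (∀ x ∈ A, G x ≠ x) →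
      (∀ x ∈ A, ∀ b : Set ℕ, G x ∈ b → x ∈ ballS (invS e) (ballS e b)) → False := by
    intro G A hAp hfpf hinc
    obtain ⟨Bd, hBdp, hBdA, hBdd⟩ := disj_lemma (⇑G) G.injective p A hAp hfpf
    by_cases hqF : Ultrafilter.map (⇑G) p ∈ F
    · by_cases hqp : Ultrafilter.map (⇑G) p = p
      · have h1 : (⇑G) '' Bd ∈ Ultrafilter.map (⇑G) p := by
          rw [Ultrafilter.mem_map, Set.preimage_image_eq Bd G.injective]
          exact hBdp
        rw [hqp] at h1
        have hne2 := Ultrafilter.nonempty_of_mem (Filter.inter_mem h1 hBdp)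
        rw [hBdd] at hne2
        exact Set.not_nonempty_empty hne2
      · exact hiso p hp _ hqF (fun hpq => hqp hpq.symm) ⟨G, rfl⟩
    · obtain ⟨b, hbB, hbq⟩ := hout _ hqF
      have hpre : (⇑G) ⁻¹' b ∈ p := Ultrafilter.mem_map.mp hbq
      have hcB := (hball _ (hball b hbB).1).2
      have hcompl : (ballS (invS e) (ballS e b))ᶜ ∈ p := hcB p hp
      have hmem : (⇑G) ⁻¹' b ∩ A ∈ p := Filter.inter_mem hpre hAp
      have hsub : (⇑G) ⁻¹' b ∩ A ⊆ ballS (invS e) (ballS e b) := fun x hx => hinc x hx.2 b hx.1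
      exact (Ultrafilter.compl_mem_iff_notMem.mp hcompl) (Filter.mem_of_superset hmem hsub)
  have hSA : ({x | x ∈ D ∧ ¬ good x} ∪ {x | x ∈ D ∧ good x}) ∈ p := by
    refine Filter.mem_of_superset hD fun x hx => ?_
    by_cases hgx : good x
    · exact Or.inr ⟨hx, hgx⟩
    · exact Or.inl ⟨hx, hgx⟩
  rcases Ultrafilter.union_mem_iff.mp hSA with hSp | hAp
  · -- injective case
    have hMain : ∀ S1 : Set ℕ, S1 ∈ p → S1 ⊆ {x | x ∈ D ∧ ¬ good x} →
        S1ᶜ.Infinite → (f '' S1)ᶜ.Infinite → False := by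
      intro S1 hS1p hS1S hS1c hS1ic
      have hfinj : Set.InjOn f S1 := hSinj.mono hS1S
      haveI : Infinite ↥(S1ᶜ) := Set.infinite_coe_iff.mpr hS1c
      haveI : Infinite ↥((f '' S1)ᶜ) := Set.infinite_coe_iff.mpr hS1ic
      obtain ⟨e2⟩ : Nonempty (↥(S1ᶜ) ≃ ↥((f '' S1)ᶜ)) := nonempty_equiv_of_countable
      set e1 : ↥S1 ≃ ↥(f '' S1) := Equiv.Set.imageOfInjOn f S1 hfinj with he1
      set G : ℕ ≃ ℕ := (Equiv.Set.sumCompl S1).symm.trans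
        ((e1.sumCongr e2).trans (Equiv.Set.sumCompl (f '' S1))) with hG
      have hGf : ∀ x ∈ S1, G x = f x := by
        intro x hx
        rw [hG]
        simp only [Equiv.trans_apply]
        rw [Equiv.Set.sumCompl_symm_apply_of_mem hx]
        simp only [Equiv.sumCongr_apply, Sum.map_inl, Equiv.Set.sumCompl_apply_inl]
        rfl
      refine finish G S1 hS1p ?_ ?_
      · intro x hx
        rw [hGf x hx]
        exact hf1 x (hS1S hx).1
      · intro x hx b hxb
        rw [hGf x hx] at hxb
        exact ⟨f x, ⟨f x, hxb, hdiag rfl⟩, hf2 x (hS1S hx).1⟩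
    set Ev : Set ℕ := {n : ℕ | n % 2 = 0} with hEv
    have hEvI : Ev.Infinite := by
      apply Set.infinite_of_injective_forall_mem (f := fun n : ℕ => 2 * n)
      · intro a b hab; dsimp only at hab; omega
      · intro a; simp only [hEv, Set.mem_setOf_eq]; omega
    have hOdI : Evᶜ.Infinite := by
      apply Set.infinite_of_injective_forall_mem (f := fun n : ℕ => 2 * n + 1)
      · intro a b hab; dsimp only at hab; omega
      · intro a; simp only [hEv, Set.mem_compl_iff, Set.mem_setOf_eq]; omega
    have hsplit : ∀ W : Set ℕ, W ∈ p → ∃ W', W' ∈ p ∧ W' ⊆ W ∧ Wᶜ ⊆ W'ᶜ ∧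
        ((W' ⊆ Ev) ∨ (W' ⊆ Evᶜ)) := by
      intro W hW
      have hun : (W ∩ Ev) ∪ (W \ Ev) ∈ p := by
        refine Filter.mem_of_superset hW fun x hx => ?_
        by_cases hxe : x ∈ Ev
        · exact Or.inl ⟨hx, hxe⟩
        · exact Or.inr ⟨hx, hxe⟩
      rcases Ultrafilter.union_mem_iff.mp hun with h | h
      · exact ⟨W ∩ Ev, h, Set.inter_subset_left, Set.compl_subset_compl.mpr Set.inter_subset_left,
          Or.inl Set.inter_subset_right⟩
      · exact ⟨W \ Ev, h, Set.diff_subset, Set.compl_subset_compl.mpr Set.diff_subset,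
          Or.inr fun x hx => hx.2⟩
    obtain ⟨S0, hS0p, hS0S, _, hS0par⟩ := hsplit _ hSp
    have hS0c : S0ᶜ.Infinite := by
      rcases hS0par with h | h
      · exact hOdI.mono (Set.compl_subset_compl.mpr h)
      · exact hEvI.mono fun x hx hc => (h hc) hx
    -- now split along the parity of the image
    have hun2 : (S0 ∩ f ⁻¹' Ev) ∪ (S0 \ f ⁻¹' Ev) ∈ p := by
      refine Filter.mem_of_superset hS0p fun x hx => ?_
      by_cases hxe : x ∈ f ⁻¹' Ev
      · exact Or.inl ⟨hx, hxe⟩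
      · exact Or.inr ⟨hx, hxe⟩
    rcases Ultrafilter.union_mem_iff.mp hun2 with h2 | h2
    · refine hMain _ h2 (fun x hx => hS0S hx.1) ?_ ?_
      · exact hS0c.mono (Set.compl_subset_compl.mpr Set.inter_subset_left)
      · refine hOdI.mono fun x hx hc => ?_
        obtain ⟨w, hw, rfl⟩ := hc
        exact hx hw.2
    · refine hMain _ h2 (fun x hx => hS0S hx.1) ?_ ?_
      · exact hS0c.mono (Set.compl_subset_compl.mpr Set.diff_subset)
      · refine hEvI.mono fun x hx hc => ?_
        obtain ⟨w, hw, rfl⟩ := hc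
        exact hw.2 hx
  · -- involution case
    set H : ℕ → ℕ := fun x => if x ∈ D ∧ good x then h x else x with hH
    have hHinv : Function.Involutive H := by
      intro x
      simp only [hH]
      by_cases hx : x ∈ D ∧ good x
      · rw [if_pos hx]
        obtain ⟨hD1, hG1, hhh, _, _⟩ := hstep x hx.1 hx.2
        rw [if_pos ⟨hD1, hG1⟩]
        exact hhh
      · rw [if_neg hx, if_neg hx]
    refine finish (Function.Involutive.toPerm H hHinv) {x | x ∈ D ∧ good x} hAp ?_ ?_
    · intro x hx
      show H x ≠ x
      simp only [hH]
      rw [if_pos (show x ∈ D ∧ good x from hx)]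
      exact (hstep x hx.1 hx.2).2.2.2.1
    · intro x hx b hxb
      obtain ⟨hD1, hG1, hhh, hne1, hfeq⟩ := hstep x hx.1 hx.2
      have hxb' : h x ∈ b := by
        have hHx : H x = h x := by
          simp only [hH]; rw [if_pos (show x ∈ D ∧ good x from hx)]
        rw [← hHx]
        exact hxb
      refine ⟨f x, ⟨h x, hxb', ?_⟩, ?_⟩
      · have := hf2 (h x) hD1
        rwa [hfeq] at this
      · exact hf2 x hx.1

end Stmt11Aux


theorem stmt11 (F : Set (Ultrafilter ℕ)) (hne : F.Nonempty) (hcl : IsClosed F)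
    (hfree : ∀ p ∈ F, FreeU p)
    (hiso : ∀ p ∈ F, ∀ q ∈ F, p ≠ q → ¬ UIso p q) :
    IsBornology {b : Set ℕ | ∀ p ∈ F, bᶜ ∈ p} ∧
    sharp {b : Set ℕ | ∀ p ∈ F, bᶜ ∈ p} = F ∧
    downB {b : Set ℕ | ∀ p ∈ F, bᶜ ∈ p} = upB {b : Set ℕ | ∀ p ∈ F, bᶜ ∈ p} := by
  classical
  have hBsingle : ∀ n : ℕ, ∀ p ∈ F, ({n}ᶜ : Set ℕ) ∈ p := by
    intro n p hp
    rw [Ultrafilter.compl_mem_iff_notMem]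
    intro hmem
    obtain ⟨x, hx, hpx⟩ := Ultrafilter.eq_pure_of_finite_mem (Set.finite_singleton n) hmem
    exact hfree p hp x hpx
  have hsharp : sharp {b : Set ℕ | ∀ p ∈ F, bᶜ ∈ p} = F := by
    apply Set.Subset.antisymm
    · intro q hq
      by_contra hqF
      obtain ⟨t, htb, hqt, hts⟩ :=
        ultrafilterBasis_is_basis.exists_subset_of_mem_open (show q ∈ Fᶜ from hqF)
          hcl.isOpen_compl
      obtain ⟨s, rfl⟩ := htb
      have hsB : ∀ p ∈ F, (sᶜ : Set ℕ) ∈ p := by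
        intro p hp
        rw [Ultrafilter.compl_mem_iff_notMem]
        intro hsp
        exact (hts hsp) hp
      exact (Ultrafilter.compl_mem_iff_notMem.mp (hq s hsB)) hqt
    · intro p hp b hb
      exact hb p hp
  have hout : ∀ q : Ultrafilter ℕ, q ∉ F → ∃ b, (∀ p ∈ F, (bᶜ : Set ℕ) ∈ p) ∧ b ∈ q := by
    intro q hq
    by_contra hno
    push_neg at hno
    apply hq
    rw [← hsharp]
    intro b hb
    exact (Ultrafilter.compl_mem_iff_notMem).mpr (hno b hb)
  refine ⟨⟨?_, ?_, ?_, ?_⟩, hsharp, ?_⟩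
  · apply Set.eq_univ_of_forall
    intro x
    exact ⟨{x}, fun p hp => hBsingle x p hp, rfl⟩
  · intro h
    obtain ⟨p, hp⟩ := hne
    have := h p hp
    rw [Set.compl_univ] at this
    exact Filter.empty_notMem (p : Filter ℕ) this
  · intro b hb a hab p hp
    exact Filter.mem_of_superset (hb p hp) (Set.compl_subset_compl.mpr hab)
  · intro b hb c hc p hp
    rw [Set.compl_union]
    exact Filter.inter_mem (hb p hp) (hc p hp)
  · apply Set.Subset.antisymm
    · rintro E ⟨hd, b, hb, hsub⟩
      refine ⟨hd, fun a ha => ⟨?_, ?_⟩⟩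
      · intro p hp
        have hsub2 : ballS E a ⊆ a ∪ b := by
          rintro y ⟨x, hxa, hxy⟩
          rcases hsub hxy with h | h
          · exact Or.inr h.2
          · obtain rfl : x = y := h
            exact Or.inl hxa
        apply Filter.mem_of_superset ?_ (Set.compl_subset_compl.mpr hsub2)
        rw [Set.compl_union]
        exact Filter.inter_mem (ha p hp) (hb p hp)
      · intro p hp
        have hsub2 : ballS (invS E) a ⊆ a ∪ b := by
          rintro y ⟨x, hxa, hxy⟩
          rcases hsub hxy with h | h
          · exact Or.inr h.1
          · obtain rfl : y = x := h
            exact Or.inl hxa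
        apply Filter.mem_of_superset ?_ (Set.compl_subset_compl.mpr hsub2)
        rw [Set.compl_union]
        exact Filter.inter_mem (ha p hp) (hb p hp)
    · intro E hE
      have h1 : ∀ p ∈ F, ({x | ∃ y, y ≠ x ∧ (x, y) ∈ E}ᶜ : Set ℕ) ∈ p := by
        intro p hp
        by_contra hc
        exact Stmt11Aux.key F hiso hout E hE p hp (Ultrafilter.compl_notMem_iff.mp hc)
      have hE' : invS E ∈ upB {b : Set ℕ | ∀ p ∈ F, bᶜ ∈ p} := by
        refine ⟨?_, fun a ha => ⟨(hE.2 a ha).2, ?_⟩⟩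
        · intro z hz
          exact hE.1 ((hz : z.1 = z.2).symm : ((z.2, z.1) : ℕ × ℕ).1 = (z.2, z.1).2)
        · have hinv : invS (invS E) = E := rfl
          rw [hinv]
          exact (hE.2 a ha).1
      have h2 : ∀ p ∈ F, ({x | ∃ y, y ≠ x ∧ (y, x) ∈ E}ᶜ : Set ℕ) ∈ p := by
        intro p hp
        by_contra hc
        exact Stmt11Aux.key F hiso hout (invS E) hE' p hp (Ultrafilter.compl_notMem_iff.mp hc)
      refine ⟨hE.1, {x | ∃ y, y ≠ x ∧ (x, y) ∈ E} ∪ {x | ∃ y, y ≠ x ∧ (y, x) ∈ E}, ?_, ?_⟩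
      · intro p hp
        rw [Set.compl_union]
        exact Filter.inter_mem (h1 p hp) (h2 p hp)
      · rintro ⟨x, y⟩ hxy
        by_cases hxy2 : x = y
        · exact Or.inr hxy2
        · exact Or.inl ⟨Or.inl ⟨y, fun h => hxy2 h.symm, hxy⟩, Or.inr ⟨x, hxy2, hxy⟩⟩
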